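/- In an even cycle C_{2k} (k ≥ 2) with vertex powers p1, …, p_{2k}, a balanced equilibrium exists if and only if the alternating sum condition holds: ∑_{i odd} p i = ∑_{i even} p i, and for the edge values defined by alternating partial sums, all values are nonnegative — equivalently there exists t ≥ 0 such that setting v on edges alternately using t yields nonnegative values v_e = t or p_i − (previous value) ≥ 0 around the cycle. -/

import Mathlib

/-- Alternating edge values around a cycle: `altVal p t 0 = t` and
`altVal p t (m+1) = p (m+1) - altVal p t m`. -/
def altVal (p : ℕ → ℝ) (t : ℝ) : ℕ → ℝ
  | 0 => t
  | m + 1 => p (m + 1) - altVal p t m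

lemma altVal_signed (q : ℕ → ℝ) (t : ℝ) :
    ∀ m, (-1 : ℝ) ^ m * altVal q t m
      = t + ∑ j ∈ Finset.range m, (-1 : ℝ) ^ (j + 1) * q (j + 1)
  | 0 => by simp [altVal]
  | m + 1 => by
    have ih := altVal_signed q t m
    rw [Finset.sum_range_succ]
    show (-1 : ℝ) ^ (m + 1) * (q (m + 1) - altVal q t m) = _
    have h : (-1 : ℝ) ^ (m + 1) * (q (m + 1) - altVal q t m)
        = (-1 : ℝ) ^ m * altVal q t m + (-1 : ℝ) ^ (m + 1) * q (m + 1) := by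
      ring
    rw [h, ih]
    ring

theorem stmt16 (k : ℕ) (hk : 2 ≤ k) [NeZero (2 * k)] (p : ZMod (2 * k) → ℝ) :
    (∃ U : Matrix (ZMod (2 * k)) (ZMod (2 * k)) ℝ,
      U.IsSymm ∧ (∀ i j, 0 ≤ U i j) ∧ (∀ i, U i i = 0) ∧
      (∀ i j, ¬ (j = i + 1 ∨ i = j + 1) → U i j = 0) ∧ ∀ i, ∑ j, U i j = p i) ↔
    ((∑ i ∈ Finset.univ.filter (fun i : ZMod (2 * k) => Odd (ZMod.val i)), p i =
        ∑ i ∈ Finset.univ.filter (fun i : ZMod (2 * k) => Even (ZMod.val i)), p i) ∧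
      ∃ t : ℝ, 0 ≤ t ∧
        ∀ m < 2 * k, 0 ≤ altVal (fun m => p ((m : ℕ) : ZMod (2 * k))) t m) := by
  have hn4 : 4 ≤ 2 * k := by omega
  set q : ℕ → ℝ := fun m => p ((m : ℕ) : ZMod (2 * k)) with hq
  have hcast_val : ∀ i : ZMod (2 * k), ((i.val : ℕ) : ZMod (2 * k)) = i := by
    intro i
    rw [ZMod.natCast_val, ZMod.cast_id]
  have h2ne : (2 : ZMod (2 * k)) ≠ 0 := by
    intro h
    have h2 : ((2 : ℕ) : ZMod (2 * k)) = 0 := by exact_mod_cast h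
    rw [ZMod.natCast_eq_zero_iff] at h2
    have := Nat.le_of_dvd (by norm_num) h2
    omega
  have hne2 : ∀ i j : ZMod (2 * k), j = i + 1 → i = j + 1 → False := by
    intro i j h1 h2
    subst h1
    have h3 : i = i + 2 := h2.trans (by ring)
    exact h2ne (left_eq_add.mp h3)
  have hne11 : ∀ i : ZMod (2 * k), i + 1 ≠ i - 1 := by
    intro i h
    apply h2ne
    have h3 : (i + 1) - (i - 1) = 0 := by rw [h]; ring
    calc (2 : ZMod (2 * k)) = (i + 1) - (i - 1) := by ring
      _ = 0 := h3
  -- key: if v is an edge assignment satisfying the vertex equations, altVal recovers it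
  have key : ∀ v : ZMod (2 * k) → ℝ, (∀ i, v (i - 1) + v i = p i) →
      ∀ m : ℕ, altVal q (v 0) m = v ((m : ℕ) : ZMod (2 * k)) := by
    intro v hv m
    induction m with
    | zero => rw [Nat.cast_zero]; rfl
    | succ m ih =>
      have h1 : ((m : ℕ) : ZMod (2 * k)) = (((m + 1 : ℕ) : ZMod (2 * k)) - 1) := by
        push_cast; ring
      have h2 := hv (((m + 1 : ℕ) : ZMod (2 * k)))
      rw [← h1] at h2
      show q (m + 1) - altVal q (v 0) m = v (((m + 1 : ℕ)) : ZMod (2 * k))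
      rw [ih]
      have h3 : q (m + 1) = p (((m + 1 : ℕ)) : ZMod (2 * k)) := rfl
      rw [h3]
      linarith
  -- the signed sum S
  have hS1 : ∀ t : ℝ, altVal q t (2 * k)
      = t + ∑ j ∈ Finset.range (2 * k), (-1 : ℝ) ^ j * q j := by
    intro t
    have heven : Even (2 * k) := even_two_mul k
    have h := altVal_signed q t (2 * k)
    rw [heven.neg_one_pow, one_mul] at h
    rw [h]
    congr 1
    have hsucc' := Finset.sum_range_succ' (fun j => (-1 : ℝ) ^ j * q j) (2 * k)
    have hsucc := Finset.sum_range_succ (fun j => (-1 : ℝ) ^ j * q j) (2 * k)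
    have hq0 : (-1 : ℝ) ^ (2 * k) * q (2 * k) = (-1 : ℝ) ^ 0 * q 0 := by
      rw [heven.neg_one_pow]
      have : q (2 * k) = q 0 := by
        show p (((2 * k : ℕ)) : ZMod (2 * k)) = p (((0 : ℕ)) : ZMod (2 * k))
        rw [ZMod.natCast_self, Nat.cast_zero]
      rw [this]; simp
    simp only [pow_zero, one_mul] at hq0
    linarith
  have hS2 : ∑ j ∈ Finset.range (2 * k), (-1 : ℝ) ^ j * q j
      = (∑ i ∈ Finset.univ.filter (fun i : ZMod (2 * k) => Even (ZMod.val i)), p i)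
        - (∑ i ∈ Finset.univ.filter (fun i : ZMod (2 * k) => Odd (ZMod.val i)), p i) := by
    have step1 : ∑ j ∈ Finset.range (2 * k), (-1 : ℝ) ^ j * q j
        = ∑ i : ZMod (2 * k), (-1 : ℝ) ^ (ZMod.val i) * p i := by
      refine Finset.sum_nbij' (fun m => ((m : ℕ) : ZMod (2 * k))) ZMod.val
        (fun a _ => Finset.mem_univ _)
        (fun a _ => Finset.mem_range.mpr (ZMod.val_lt a))
        (fun a ha => ZMod.val_cast_of_lt (Finset.mem_range.mp ha))
        (fun a _ => hcast_val a) ?_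
      intro a ha
      rw [ZMod.val_cast_of_lt (Finset.mem_range.mp ha)]
    rw [step1,
      ← Finset.sum_filter_add_sum_filter_not Finset.univ
        (fun i : ZMod (2 * k) => Even (ZMod.val i))
        (fun i => (-1 : ℝ) ^ (ZMod.val i) * p i)]
    have e1 : ∑ i ∈ Finset.univ.filter (fun i : ZMod (2 * k) => Even (ZMod.val i)),
        (-1 : ℝ) ^ (ZMod.val i) * p i
        = ∑ i ∈ Finset.univ.filter (fun i : ZMod (2 * k) => Even (ZMod.val i)), p i := by
      refine Finset.sum_congr rfl fun i hi => ?_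
      rw [((Finset.mem_filter.mp hi).2).neg_one_pow, one_mul]
    have e2 : ∑ i ∈ Finset.univ.filter (fun i : ZMod (2 * k) => ¬ Even (ZMod.val i)),
        (-1 : ℝ) ^ (ZMod.val i) * p i
        = - ∑ i ∈ Finset.univ.filter (fun i : ZMod (2 * k) => Odd (ZMod.val i)), p i := by
      have hfil : Finset.univ.filter (fun i : ZMod (2 * k) => ¬ Even (ZMod.val i))
          = Finset.univ.filter (fun i : ZMod (2 * k) => Odd (ZMod.val i)) := by
        apply Finset.filter_congr
        intro i _
        simp [Nat.not_even_iff_odd]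
      rw [hfil, ← Finset.sum_neg_distrib]
      refine Finset.sum_congr rfl fun i hi => ?_
      rw [((Finset.mem_filter.mp hi).2).neg_one_pow]
      ring
    rw [e1, e2]
    ring
  constructor
  · rintro ⟨U, hsymm, hpos, hdiag, hsupp, hrow⟩
    set v : ZMod (2 * k) → ℝ := fun i => U i (i + 1) with hv
    have hiden : ∀ i j : ZMod (2 * k),
        U i j = (if j = i + 1 then U i (i + 1) else 0)
          + (if j = i - 1 then U i (i - 1) else 0) := by
      intro i j
      by_cases h1 : j = i + 1
      · have h2 : j ≠ i - 1 := by rw [h1]; exact hne11 i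
        subst h1
        simp [h2]
      · by_cases h2 : j = i - 1
        · have h3 : i = j + 1 := by rw [h2]; ring
          subst h2
          simp [h1]
        · have h4 : ¬ (i = j + 1) := by
            intro h
            apply h2
            rw [h]; ring
          have h0 : U i j = 0 := hsupp i j (by push_neg; exact ⟨h1, h4⟩)
          simp [h1, h2, h0]
    have hrow' : ∀ i, v (i - 1) + v i = p i := by
      intro i
      have h := hrow i
      rw [Finset.sum_congr rfl (fun j _ => hiden i j), Finset.sum_add_distrib,
        Finset.sum_ite_eq' Finset.univ (i + 1) (fun _ => U i (i + 1)),
        Finset.sum_ite_eq' Finset.univ (i - 1) (fun _ => U i (i - 1))] at h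
      simp only [Finset.mem_univ, if_true] at h
      have hv1 : v (i - 1) = U i (i - 1) := by
        show U (i - 1) ((i - 1) + 1) = U i (i - 1)
        rw [sub_add_cancel]
        exact hsymm.apply i (i - 1)
      rw [hv1]
      show U i (i - 1) + U i (i + 1) = p i
      linarith
    have hkey := key v hrow'
    have ht : 0 ≤ v 0 := hpos 0 (0 + 1)
    refine ⟨?_, v 0, ht, fun m _ => ?_⟩
    · have h1 : altVal q (v 0) (2 * k) = v (((2 * k : ℕ)) : ZMod (2 * k)) := hkey (2 * k)
      rw [ZMod.natCast_self] at h1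
      have h2 := hS1 (v 0)
      have hS0 : ∑ j ∈ Finset.range (2 * k), (-1 : ℝ) ^ j * q j = 0 := by linarith
      rw [hS2] at hS0
      linarith
    · rw [hkey m]
      exact hpos _ _
  · rintro ⟨hsum, t, ht, hnn⟩
    set a : ℕ → ℝ := fun m => altVal q t m with ha
    have haend : a (2 * k) = t := by
      have h1 := hS1 t
      rw [hS2] at h1
      show altVal q t (2 * k) = t
      linarith
    set v : ZMod (2 * k) → ℝ := fun i => a (ZMod.val i) with hv
    have hvnn : ∀ i, 0 ≤ v i := fun i => hnn (ZMod.val i) (ZMod.val_lt i)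
    have hveq : ∀ i, v (i - 1) + v i = p i := by
      intro i
      by_cases hi : i = 0
      · subst hi
        have h01 : (0 - 1 : ZMod (2 * k)) = (((2 * k - 1 : ℕ)) : ZMod (2 * k)) := by
          rw [Nat.cast_sub (by omega), ZMod.natCast_self, Nat.cast_one]
        have hval : ZMod.val (0 - 1 : ZMod (2 * k)) = 2 * k - 1 := by
          rw [h01, ZMod.val_cast_of_lt (by omega)]
        have hrec : a (2 * k) = q (2 * k) - a (2 * k - 1) := by
          have he : 2 * k = (2 * k - 1) + 1 := by omega
          rw [he]
          rfl
        have hq2k : q (2 * k) = p 0 := by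
          show p (((2 * k : ℕ)) : ZMod (2 * k)) = p 0
          rw [ZMod.natCast_self]
        show a (ZMod.val (0 - 1 : ZMod (2 * k))) + a (ZMod.val (0 : ZMod (2 * k))) = p 0
        rw [hval, ZMod.val_zero]
        have ha0 : a 0 = t := rfl
        linarith [hrec, hq2k, haend]
      · have h1 : ZMod.val i ≠ 0 := fun h => hi (by rw [← hcast_val i, h, Nat.cast_zero])
        obtain ⟨m, hm⟩ : ∃ m, ZMod.val i = m + 1 := ⟨ZMod.val i - 1, by omega⟩
        have hmlt : m + 1 < 2 * k := hm ▸ ZMod.val_lt i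
        have hi1 : i - 1 = ((m : ℕ) : ZMod (2 * k)) := by
          rw [← hcast_val i, hm]; push_cast; ring
        have hvi1 : ZMod.val (i - 1) = m := by
          rw [hi1, ZMod.val_cast_of_lt (by omega)]
        show a (ZMod.val (i - 1)) + a (ZMod.val i) = p i
        rw [hvi1, hm]
        have h2 : a (m + 1) = q (m + 1) - a m := rfl
        have h3 : q (m + 1) = p i := by
          show p (((m + 1 : ℕ)) : ZMod (2 * k)) = p i
          rw [← hm, hcast_val]
        linarith
    refine ⟨fun i j => if j = i + 1 then v i else if i = j + 1 then v j else 0,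
      ?_, ?_, ?_, ?_, ?_⟩
    · apply Matrix.IsSymm.ext
      intro i j
      by_cases h1 : j = i + 1
      · by_cases h2 : i = j + 1
        · exact (hne2 i j h1 h2).elim
        · subst h1
          simp [h2, show i ≠ i + 1 + 1 from fun h => hne2 i (i + 1) rfl h]
      · by_cases h2 : i = j + 1
        · subst h2
          simp [h1, show j ≠ j + 1 + 1 from fun h => hne2 j (j + 1) rfl h]
        · simp [h1, h2]
    · intro i j
      dsimp only
      split_ifs
      · exact hvnn i
      · exact hvnn j
      · exact le_rfl
    · intro i
      have h1 : ¬ (i = i + 1) := by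
        intro h
        apply h2ne
        have h3 : (1 : ZMod (2 * k)) = 0 := left_eq_add.mp h
        calc (2 : ZMod (2 * k)) = 1 + 1 := by ring
          _ = 0 := by rw [h3]; ring
      simp [h1]
    · intro i j h
      push_neg at h
      simp [h.1, h.2]
    · intro i
      have hterm : ∀ j : ZMod (2 * k),
          (if j = i + 1 then v i else if i = j + 1 then v j else 0)
          = (if j = i + 1 then v i else 0) + (if j = i - 1 then v (i - 1) else 0) := by
        intro j
        by_cases h1 : j = i + 1
        · have h2 : j ≠ i - 1 := by rw [h1]; exact hne11 i
          simp only [if_pos h1, if_neg h2, add_zero]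
        · by_cases h2 : j = i - 1
          · have h3 : i = j + 1 := by rw [h2]; ring
            simp only [if_neg h1, if_pos h3, if_pos h2, zero_add]
            rw [h2]
          · have h3 : ¬ (i = j + 1) := by
              intro h
              apply h2
              rw [h]; ring
            simp [h1, h2, h3]
      rw [Finset.sum_congr rfl (fun j _ => hterm j), Finset.sum_add_distrib,
        Finset.sum_ite_eq' Finset.univ (i + 1) (fun _ => v i),
        Finset.sum_ite_eq' Finset.univ (i - 1) (fun _ => v (i - 1))]
      simp only [Finset.mem_univ, if_true]
      linarith [hveq i]
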